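/- arXiv:1706.08023 — 2 statements merged into one kernel-verified Lean document; each statement's English description precedes it below -/
import Mathlib

section
/- Let p be a prime, d ≥ 1 an integer, ε ∈ {0,1}^{d-1} a fixed vector, and a, b ∈ ℤ_p^d. If P^{a,ε}_{d,p} ≠ P^{b,ε}_{d,p}, then P^{a,ε}_{d,p} ∩ P^{b,ε}_{d,p} = {(0,...,0)}. -/
/-- The `i`-th coordinate (for `i = 1,…,d`) of the `j`-th point of the generalized
`p`-set with parameters `a` and `ε` (and `a'_h = ε_h * a_h`), namely the fractional
part of `(∑_{h=1}^{i-1} a'_h j^h + a_i j^i) / N`. -/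
noncomputable def genCoord (N : ℕ) (a ε : ℕ → ℤ) (j i : ℕ) : ℝ :=
  Int.fract ((((∑ h ∈ Finset.Ico 1 i, ε h * a h * (j : ℤ) ^ h) + a i * (j : ℤ) ^ i : ℤ) : ℝ) / (N : ℝ))

/-- The point `x_j^{a,ε} ∈ [0,1)^d` of the generalized `p`-set. -/
noncomputable def genPoint (p d : ℕ) (a ε : ℕ → ℤ) (j : ℕ) : Fin d → ℝ :=
  fun i => genCoord p a ε j (i.1 + 1)

/-- The generalized `p`-set `P^{a,ε}_{d,p} = {x_j^{a,ε} : j = 0,…,p-1} ⊂ [0,1)^d`. -/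
noncomputable def genPset (p d : ℕ) (a ε : ℕ → ℤ) : Set (Fin d → ℝ) :=
  {x | ∃ j < p, x = genPoint p d a ε j}

/-- The integer numerator of `genCoord`. -/
def Sint (a ε : ℕ → ℤ) (j i : ℕ) : ℤ :=
  (∑ h ∈ Finset.Ico 1 i, ε h * a h * (j : ℤ) ^ h) + a i * (j : ℤ) ^ i

lemma genCoord_eq (N : ℕ) (a ε : ℕ → ℤ) (j i : ℕ) :
    genCoord N a ε j i = Int.fract ((Sint a ε j i : ℝ) / (N : ℝ)) := rfl

lemma Sint_cast (p : ℕ) (a ε : ℕ → ℤ) (j i : ℕ) :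
    ((Sint a ε j i : ℤ) : ZMod p) =
      (∑ h ∈ Finset.Ico 1 i, (ε h : ZMod p) * (a h : ZMod p) * (j : ZMod p) ^ h)
        + (a i : ZMod p) * (j : ZMod p) ^ i := by
  unfold Sint
  push_cast
  ring

lemma fract_div_eq_iff {p : ℕ} (hp : 0 < p) (m n : ℤ) :
    Int.fract ((m : ℝ) / (p : ℝ)) = Int.fract ((n : ℝ) / (p : ℝ)) ↔
      ((m : ZMod p) = (n : ZMod p)) := by
  have hpR : (p : ℝ) ≠ 0 := Nat.cast_ne_zero.mpr hp.ne'
  rw [Int.fract_eq_fract, ZMod.intCast_eq_intCast_iff, Int.modEq_iff_dvd]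
  constructor
  · rintro ⟨z, hz⟩
    refine ⟨-z, ?_⟩
    have : (m : ℝ) - n = z * p := by
      field_simp at hz
      linarith
    have h2 : m - n = z * p := by exact_mod_cast this
    linarith
  · rintro ⟨z, hz⟩
    refine ⟨-z, ?_⟩
    have hz' : (n : ℤ) - m = p * z := hz
    have h2 : m - n = -(z * p) := by linarith
    have : (m : ℝ) - n = -(z * p) := by exact_mod_cast h2
    field_simp
    push_cast
    linarith

lemma fract_div_eq_zero {p : ℕ} (hp : 0 < p) (m : ℤ) (hm : (m : ZMod p) = 0) :
    Int.fract ((m : ℝ) / (p : ℝ)) = 0 := by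
  have := (fract_div_eq_iff hp m 0).mpr (by simpa using hm)
  simpa using this

/-- From equality of all the `Sint` values mod `p`, deduce termwise equality. -/
lemma terms_of_S {p d : ℕ} (a b ε : ℕ → ℤ) (j k : ℕ)
    (hS : ∀ i ∈ Finset.Icc 1 d, ((Sint a ε j i : ℤ) : ZMod p) = ((Sint b ε k i : ℤ) : ZMod p)) :
    ∀ i ∈ Finset.Icc 1 d,
      (a i : ZMod p) * (j : ZMod p) ^ i = (b i : ZMod p) * (k : ZMod p) ^ i := by
  intro i
  induction i using Nat.strong_induction_on with
  | _ i ih =>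
    intro hi
    have hS' := hS i hi
    rw [Sint_cast, Sint_cast] at hS'
    have hsum : (∑ h ∈ Finset.Ico 1 i, (ε h : ZMod p) * (a h : ZMod p) * (j : ZMod p) ^ h)
        = (∑ h ∈ Finset.Ico 1 i, (ε h : ZMod p) * (b h : ZMod p) * (k : ZMod p) ^ h) := by
      apply Finset.sum_congr rfl
      intro h hh
      obtain ⟨h1, h2⟩ := Finset.mem_Ico.mp hh
      obtain ⟨_, hid⟩ := Finset.mem_Icc.mp hi
      have := ih h h2 (Finset.mem_Icc.mpr ⟨h1, by omega⟩)
      rw [mul_assoc, mul_assoc, this]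
    rw [hsum] at hS'
    exact add_left_cancel hS'

/-- From termwise equality, deduce equality of the `Sint` values mod `p`. -/
lemma S_of_terms {p d : ℕ} (a b ε : ℕ → ℤ) (j k : ℕ)
    (hT : ∀ i ∈ Finset.Icc 1 d,
      (a i : ZMod p) * (j : ZMod p) ^ i = (b i : ZMod p) * (k : ZMod p) ^ i) :
    ∀ i ∈ Finset.Icc 1 d, ((Sint a ε j i : ℤ) : ZMod p) = ((Sint b ε k i : ℤ) : ZMod p) := by
  intro i hi
  obtain ⟨h1, h2⟩ := Finset.mem_Icc.mp hi
  rw [Sint_cast, Sint_cast]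
  congr 1
  · apply Finset.sum_congr rfl
    intro h hh
    obtain ⟨hh1, hh2⟩ := Finset.mem_Ico.mp hh
    have := hT h (Finset.mem_Icc.mpr ⟨hh1, by omega⟩)
    rw [mul_assoc, mul_assoc, this]
  · exact hT i hi

lemma genPoint_zero (p d : ℕ) (a ε : ℕ → ℤ) : genPoint p d a ε 0 = 0 := by
  funext i
  show genCoord p a ε 0 (i.1 + 1) = 0
  rw [genCoord_eq]
  have : Sint a ε 0 (i.1 + 1) = 0 := by
    unfold Sint
    rw [Finset.sum_eq_zero, zero_add]
    · rw [Nat.cast_zero, zero_pow (by omega : i.1 + 1 ≠ 0)]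
      ring
    · intro h hh
      obtain ⟨h1, _⟩ := Finset.mem_Ico.mp hh
      rw [Nat.cast_zero, zero_pow (by omega : h ≠ 0)]
      ring
  rw [this]
  simp

/-- Key inclusion lemma: if termwise congruences hold with `j` invertible mod `p`,
then `genPset a ⊆ genPset b`. -/
lemma genPset_subset {p d : ℕ} (hp : p.Prime) (a b ε : ℕ → ℤ) (j k : ℕ)
    (hj0 : (j : ZMod p) ≠ 0)
    (hT : ∀ i ∈ Finset.Icc 1 d,
      (a i : ZMod p) * (j : ZMod p) ^ i = (b i : ZMod p) * (k : ZMod p) ^ i) :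
    genPset p d a ε ⊆ genPset p d b ε := by
  haveI : Fact p.Prime := ⟨hp⟩
  rintro x ⟨j', hj', rfl⟩
  set u : ZMod p := (j : ZMod p)⁻¹ * (k : ZMod p) * (j' : ZMod p) with hu
  refine ⟨u.val, u.val_lt, ?_⟩
  have huval : ((u.val : ℕ) : ZMod p) = u := by
    simp [ZMod.natCast_val, ZMod.cast_id]
  have hT' : ∀ i ∈ Finset.Icc 1 d,
      (a i : ZMod p) * (j' : ZMod p) ^ i = (b i : ZMod p) * ((u.val : ℕ) : ZMod p) ^ i := by
    intro i hi
    rw [huval, hu, mul_pow, mul_pow]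
    have hji : (j : ZMod p) ^ i * ((j : ZMod p)⁻¹) ^ i = 1 := by
      rw [← mul_pow, mul_inv_cancel₀ hj0, one_pow]
    linear_combination (((j : ZMod p))⁻¹ ^ i * ((j' : ℕ) : ZMod p) ^ i) * hT i hi
      - (a i : ZMod p) * ((j' : ℕ) : ZMod p) ^ i * hji
  have hS := S_of_terms (p := p) (d := d) a b ε j' u.val hT'
  funext i
  show genCoord p a ε j' (i.1 + 1) = genCoord p b ε u.val (i.1 + 1)
  rw [genCoord_eq, genCoord_eq]
  exact (fract_div_eq_iff hp.pos _ _).mpr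
    (hS (i.1 + 1) (Finset.mem_Icc.mpr ⟨by omega, by omega⟩))

/-- For a fixed `ε ∈ {0,1}^{d-1}` and `a, b ∈ ℤ_p^d`: if the generalized `p`-sets
`P^{a,ε}_{d,p}` and `P^{b,ε}_{d,p}` are different, then they intersect only in the
origin `(0,…,0)`. -/
theorem gen_pset_inter_of_ne (p d : ℕ) (hp : p.Prime) (hd : 1 ≤ d) (ε : ℕ → ℤ)
    (hε : ∀ i ∈ Finset.Icc 1 (d - 1), ε i = 0 ∨ ε i = 1) (a b : ℕ → ℤ)
    (ha : ∀ i ∈ Finset.Icc 1 d, 0 ≤ a i ∧ a i ≤ (p : ℤ) - 1)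
    (hb : ∀ i ∈ Finset.Icc 1 d, 0 ≤ b i ∧ b i ≤ (p : ℤ) - 1)
    (hne : genPset p d a ε ≠ genPset p d b ε) :
    genPset p d a ε ∩ genPset p d b ε = {0} := by
  haveI : Fact p.Prime := ⟨hp⟩
  have hp0 : 0 < p := hp.pos
  ext x
  simp only [Set.mem_inter_iff, Set.mem_singleton_iff]
  constructor
  · rintro ⟨⟨j, hj, rfl⟩, k, hk, hxk⟩
    by_contra hx0
    -- coordinate congruences
    have hS : ∀ i ∈ Finset.Icc 1 d,
        ((Sint a ε j i : ℤ) : ZMod p) = ((Sint b ε k i : ℤ) : ZMod p) := by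
      intro i hi
      obtain ⟨h1, h2⟩ := Finset.mem_Icc.mp hi
      have hcoord := congrFun hxk ⟨i - 1, by omega⟩
      have hieq : i - 1 + 1 = i := by omega
      rw [show (genPoint p d a ε j ⟨i - 1, by omega⟩) = genCoord p a ε j (i - 1 + 1) from rfl,
        show (genPoint p d b ε k ⟨i - 1, by omega⟩) = genCoord p b ε k (i - 1 + 1) from rfl,
        hieq, genCoord_eq, genCoord_eq] at hcoord
      exact (fract_div_eq_iff hp0 _ _).mp hcoord
    -- some coordinate is nonzero
    obtain ⟨i0, hi0⟩ : ∃ i0 : Fin d, genPoint p d a ε j i0 ≠ 0 := by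
      by_contra h
      push_neg at h
      exact hx0 (funext h)
    have hi0mem : (i0.1 + 1) ∈ Finset.Icc 1 d := Finset.mem_Icc.mpr ⟨by omega, by omega⟩
    have hSa0 : ((Sint a ε j (i0.1 + 1) : ℤ) : ZMod p) ≠ 0 := by
      intro h
      exact hi0 (by rw [show (genPoint p d a ε j i0) = genCoord p a ε j (i0.1 + 1) from rfl,
        genCoord_eq]; exact fract_div_eq_zero hp0 _ h)
    have hSb0 : ((Sint b ε k (i0.1 + 1) : ℤ) : ZMod p) ≠ 0 := by
      rw [← hS _ hi0mem]; exact hSa0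
    -- j and k are nonzero mod p
    have hzero : ∀ (c : ℕ → ℤ) (m : ℕ), ((m : ZMod p) = 0) →
        ((Sint c ε m (i0.1 + 1) : ℤ) : ZMod p) = 0 := by
      intro c m hm
      rw [Sint_cast, hm]
      rw [Finset.sum_eq_zero, zero_add, zero_pow (by omega : i0.1 + 1 ≠ 0), mul_zero]
      intro h hh
      obtain ⟨h1, _⟩ := Finset.mem_Ico.mp hh
      rw [zero_pow (by omega : h ≠ 0), mul_zero]
    have hj0 : (j : ZMod p) ≠ 0 := fun h => hSa0 (hzero a j h)
    have hk0 : (k : ZMod p) ≠ 0 := fun h => hSb0 (hzero b k h)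
    -- termwise congruences
    have hT := terms_of_S (p := p) (d := d) a b ε j k hS
    have hT' : ∀ i ∈ Finset.Icc 1 d,
        (b i : ZMod p) * (k : ZMod p) ^ i = (a i : ZMod p) * (j : ZMod p) ^ i :=
      fun i hi => (hT i hi).symm
    exact hne (Set.Subset.antisymm
      (genPset_subset hp a b ε j k hj0 hT)
      (genPset_subset hp b a ε k j hk0 hT'))
  · rintro rfl
    exact ⟨⟨0, hp0, (genPoint_zero p d a ε).symm⟩, ⟨0, hp0, (genPoint_zero p d b ε).symm⟩⟩
end

section
/- Let p be a prime, d ≥ 2 an integer, ε', ε'' ∈ {0,1}^{d-1} with ε' ≠ ε'', and a, b ∈ ℤ_p^d. Define Z = {j : 1 ≤ j ≤ d-1, ε'_j ≠ ε''_j and a_j² + b_j² ≠ 0}. If P^{a,ε'}_{d,p} ≠ P^{b,ε''}_{d,p} and Z ≠ ∅, then the intersection P^{a,ε'}_{d,p} ∩ P^{b,ε''}_{d,p} has cardinality at most r + 1, where r = min{j : 1 ≤ j ≤ d, a_j² + b_j² ≠ 0}. -/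
def Ssum (p : ℕ) (a ε : ℕ → ℤ) (i : ℕ) (z : ZMod p) : ZMod p :=
  (∑ h ∈ Finset.Ico 1 i, (ε h : ZMod p) * (a h : ZMod p) * z ^ h) + (a i : ZMod p) * z ^ i

lemma fract_eq_iff_zmod (p : ℕ) (hp : 0 < p) (x y : ℤ) :
    Int.fract ((x : ℝ) / p) = Int.fract ((y : ℝ) / p) ↔ ((x : ZMod p) = (y : ZMod p)) := by
  rw [Int.fract_div_intCast_eq_div_intCast_mod, Int.fract_div_intCast_eq_div_intCast_mod,
    ZMod.intCast_eq_intCast_iff]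
  have hp' : (p : ℝ) ≠ 0 := Nat.cast_ne_zero.mpr hp.ne'
  constructor
  · intro h
    field_simp at h
    exact_mod_cast h
  · intro h
    unfold Int.ModEq at h
    rw [h]

lemma genCoord_eq_iff (p : ℕ) (hp : 0 < p) (a b ε₁ ε₂ : ℕ → ℤ) (j k i : ℕ) :
    genCoord p a ε₁ j i = genCoord p b ε₂ k i ↔
      Ssum p a ε₁ i (j : ZMod p) = Ssum p b ε₂ i (k : ZMod p) := by
  unfold genCoord
  rw [fract_eq_iff_zmod p hp]
  unfold Ssum
  push_cast
  rfl

lemma genPoint_eq_iff (p d : ℕ) (hp : 0 < p) (a b ε₁ ε₂ : ℕ → ℤ) (j k : ℕ) :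
    genPoint p d a ε₁ j = genPoint p d b ε₂ k ↔
      ∀ i ∈ Finset.Icc 1 d, Ssum p a ε₁ i (j : ZMod p) = Ssum p b ε₂ i (k : ZMod p) := by
  rw [funext_iff]
  constructor
  · intro h i hi
    rw [Finset.mem_Icc] at hi
    have := h ⟨i - 1, by omega⟩
    simp only [genPoint] at this
    have h2 : i - 1 + 1 = i := by omega
    rw [h2] at this
    exact (genCoord_eq_iff p hp a b ε₁ ε₂ j k i).mp this
  · intro h i
    simp only [genPoint]
    exact (genCoord_eq_iff p hp a b ε₁ ε₂ j k (i.1 + 1)).mpr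
      (h (i.1 + 1) (Finset.mem_Icc.mpr ⟨by omega, by omega⟩))

lemma Ssum_zero (p : ℕ) (a ε : ℕ → ℤ) (i : ℕ) (hi : 1 ≤ i) :
    Ssum p a ε i 0 = 0 := by
  unfold Ssum
  rw [Finset.sum_eq_zero, zero_pow (by omega), mul_zero, add_zero]
  intro h hh
  rw [Finset.mem_Ico] at hh
  rw [zero_pow (by omega), mul_zero]

lemma Ssum_eq_zero (p : ℕ) (a ε : ℕ → ℤ) (i : ℕ) (hi : 1 ≤ i) (z : ZMod p)
    (hz : ∀ h, 1 ≤ h → h ≤ i → (a h : ZMod p) = 0) :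
    Ssum p a ε i z = 0 := by
  unfold Ssum
  rw [Finset.sum_eq_zero, hz i hi le_rfl, zero_mul, add_zero]
  · intro h hh
    rw [Finset.mem_Ico] at hh
    rw [hz h hh.1 (by omega), mul_zero, zero_mul]

lemma Ssum_succ (p : ℕ) (a ε : ℕ → ℤ) (n : ℕ) (hn : 1 ≤ n) (z : ZMod p) :
    Ssum p a ε (n + 1) z =
      Ssum p a ε n z + ((ε n : ZMod p) - 1) * (a n : ZMod p) * z ^ n
        + (a (n + 1) : ZMod p) * z ^ (n + 1) := by
  unfold Ssum
  rw [Finset.sum_Ico_succ_top hn]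
  ring

lemma chain (p d : ℕ) (a b ε₁ ε₂ : ℕ → ℤ) (r m : ℕ) (J K : ZMod p)
    (hr1 : 1 ≤ r) (hmd : m + 1 ≤ d)
    (hlow : ∀ i, 1 ≤ i → i < r → a i = 0 ∧ b i = 0)
    (hmid : ∀ i, r ≤ i → i < m → ε₁ i = ε₂ i ∨ (a i = 0 ∧ b i = 0))
    (hC : ∀ i ∈ Finset.Icc 1 d, Ssum p a ε₁ i J = Ssum p b ε₂ i K) :
    ∀ i, r ≤ i → i ≤ m → (a i : ZMod p) * J ^ i = (b i : ZMod p) * K ^ i := by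
  intro i hri
  induction i, hri using Nat.le_induction with
  | base =>
    intro hrm
    have h := hC r (Finset.mem_Icc.mpr ⟨hr1, by omega⟩)
    have e1 : Ssum p a ε₁ r J = (a r : ZMod p) * J ^ r := by
      unfold Ssum
      rw [Finset.sum_eq_zero, zero_add]
      intro h hh
      rw [Finset.mem_Ico] at hh
      rw [(hlow h hh.1 hh.2).1]
      simp
    have e2 : Ssum p b ε₂ r K = (b r : ZMod p) * K ^ r := by
      unfold Ssum
      rw [Finset.sum_eq_zero, zero_add]
      intro h hh
      rw [Finset.mem_Ico] at hh
      rw [(hlow h hh.1 hh.2).2]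
      simp
    rw [e1, e2] at h
    exact h
  | succ n hn ih =>
    intro hnm
    have hnm' : n ≤ m := by omega
    have ihe := ih hnm'
    have hCn := hC n (Finset.mem_Icc.mpr ⟨by omega, by omega⟩)
    have hCn1 := hC (n + 1) (Finset.mem_Icc.mpr ⟨by omega, by omega⟩)
    rw [Ssum_succ p a ε₁ n (by omega) J, Ssum_succ p b ε₂ n (by omega) K] at hCn1
    rcases hmid n (by omega) (by omega) with he | ⟨ha0, hb0⟩
    · have heq : ((ε₁ n : ℤ) : ZMod p) = ((ε₂ n : ℤ) : ZMod p) := by rw [he]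
      linear_combination hCn1 - hCn - ((ε₂ n : ZMod p) - 1) * ihe
        - ((a n : ZMod p) * J ^ n) * heq
    · rw [ha0, hb0] at hCn1
      push_cast at hCn1
      linear_combination hCn1 - hCn

lemma count_le (p d : ℕ) (hp : p.Prime) (a ε₁ : ℕ → ℤ) (T : Set (Fin d → ℝ)) (n : ℕ)
    (P : Polynomial (ZMod p)) (hP0 : P ≠ 0) (hdeg : P.natDegree ≤ n)
    (hroot : ∀ x ∈ T, ∃ z : ZMod p, Polynomial.eval z P = 0 ∧ x = genPoint p d a ε₁ z.val) :
    T.ncard ≤ n := by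
  haveI := Fact.mk hp
  classical
  have hsub : T ⊆ (fun z : ZMod p => genPoint p d a ε₁ z.val) ''
      (P.roots.toFinset : Set (ZMod p)) := by
    intro x hx
    obtain ⟨z, hz, hxz⟩ := hroot x hx
    exact ⟨z, by simp [Multiset.mem_toFinset, Polynomial.mem_roots hP0, Polynomial.IsRoot, hz],
      hxz.symm⟩
  calc T.ncard ≤ ((fun z : ZMod p => genPoint p d a ε₁ z.val) ''
        (P.roots.toFinset : Set (ZMod p))).ncard :=
        Set.ncard_le_ncard hsub ((P.roots.toFinset : Set (ZMod p)).toFinite.image _)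
    _ ≤ (P.roots.toFinset : Set (ZMod p)).ncard := Set.ncard_image_le (Set.toFinite _)
    _ = P.roots.toFinset.card := Set.ncard_coe_finset _
    _ ≤ Multiset.card P.roots := P.roots.toFinset_card_le
    _ ≤ P.natDegree := P.card_roots'
    _ ≤ n := hdeg

open Polynomial in
lemma aux_card (p d : ℕ) (hp : p.Prime) (a b ε₁ ε₂ : ℕ → ℤ) (r m : ℕ)
    (hm1 : 1 ≤ m) (hmd : m + 1 ≤ d)
    (he1 : ε₁ m = 1) (he2 : ε₂ m = 0)
    (hr1 : 1 ≤ r) (hrm : r ≤ m)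
    (hlow : ∀ i, 1 ≤ i → i < r → a i = 0 ∧ b i = 0)
    (hmid : ∀ i, r ≤ i → i < m → ε₁ i = ε₂ i ∨ (a i = 0 ∧ b i = 0))
    (habr : (a r : ZMod p) ≠ 0 ∨ (b r : ZMod p) ≠ 0)
    (habm : (a m : ZMod p) ≠ 0 ∨ (b m : ZMod p) ≠ 0) :
    (genPset p d a ε₁ ∩ genPset p d b ε₂).ncard ≤ r + 1 := by
  haveI := Fact.mk hp
  have hp0 : 0 < p := hp.pos
  have hval : ∀ z : ZMod p, ((z.val : ℕ) : ZMod p) = z := fun z => by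
    simp [ZMod.natCast_val, ZMod.cast_id']
  -- every intersection point gives a pair (J, K) satisfying all congruences
  have main : ∀ x ∈ genPset p d a ε₁ ∩ genPset p d b ε₂, ∃ J K : ZMod p,
      (∀ i ∈ Finset.Icc 1 d, Ssum p a ε₁ i J = Ssum p b ε₂ i K) ∧
      x = genPoint p d a ε₁ J.val := by
    intro x hx
    obtain ⟨j, hj, hxj⟩ := hx.1
    obtain ⟨k, hk, hxk⟩ := hx.2
    refine ⟨(j : ZMod p), (k : ZMod p), ?_, ?_⟩
    · exact (genPoint_eq_iff p d hp0 a b ε₁ ε₂ j k).mp (hxj.symm.trans hxk)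
    · rw [hxj]
      apply (genPoint_eq_iff p d hp0 a a ε₁ ε₁ j ((j : ZMod p)).val).mpr
      intro i _
      rw [hval]
  suffices key : ∃ P : Polynomial (ZMod p), P ≠ 0 ∧ P.natDegree ≤ r + 1 ∧
      ∀ x ∈ genPset p d a ε₁ ∩ genPset p d b ε₂,
        ∃ z : ZMod p, Polynomial.eval z P = 0 ∧ x = genPoint p d a ε₁ z.val by
    obtain ⟨P, h0, hdeg, hroot⟩ := key
    exact count_le p d hp a ε₁ _ (r + 1) P h0 hdeg hroot
  by_cases hbr : (b r : ZMod p) = 0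
  · -- case 1 : b r ≡ 0, so a r ≢ 0 and J = 0 always
    have har : (a r : ZMod p) ≠ 0 := by tauto
    refine ⟨X, X_ne_zero, by simp, ?_⟩
    intro x hx
    obtain ⟨J, K, hC, hxJ⟩ := main x hx
    have h := chain p d a b ε₁ ε₂ r m J K hr1 hmd hlow hmid hC r le_rfl hrm
    have hJ : J = 0 := by
      rw [hbr, zero_mul] at h
      rcases mul_eq_zero.mp h with h' | h'
      · exact absurd h' har
      · exact pow_eq_zero_iff (by omega) |>.mp h'
    exact ⟨J, by simp [hJ], hxJ⟩
  · by_cases hbm : (b m : ZMod p) = 0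
    · -- case 2 : b m ≡ 0, so a m ≢ 0 and J = 0 always
      have ham : (a m : ZMod p) ≠ 0 := by tauto
      refine ⟨X, X_ne_zero, by simp, ?_⟩
      intro x hx
      obtain ⟨J, K, hC, hxJ⟩ := main x hx
      have h := chain p d a b ε₁ ε₂ r m J K hr1 hmd hlow hmid hC m hrm le_rfl
      have hJ : J = 0 := by
        rw [hbm, zero_mul] at h
        rcases mul_eq_zero.mp h with h' | h'
        · exact absurd h' ham
        · exact pow_eq_zero_iff (by omega) |>.mp h'
      exact ⟨J, by simp [hJ], hxJ⟩
    · by_cases ham : (a m : ZMod p) = 0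
      · -- case 3 : a m ≡ 0 and b m ≢ 0, so K = 0 always
        refine ⟨X, X_ne_zero, by simp, ?_⟩
        intro x hx
        obtain ⟨J, K, hC, hxJ⟩ := main x hx
        have h := chain p d a b ε₁ ε₂ r m J K hr1 hmd hlow hmid hC m hrm le_rfl
        have hK : K = 0 := by
          rw [ham, zero_mul] at h
          rcases mul_eq_zero.mp h.symm with h' | h'
          · exact absurd h' hbm
          · exact pow_eq_zero_iff (by omega) |>.mp h'
        by_cases hA : ∀ i, 1 ≤ i → i ≤ d → (a i : ZMod p) = 0
        · refine ⟨0, by simp, ?_⟩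
          rw [hxJ]
          apply (genPoint_eq_iff p d hp0 a a ε₁ ε₁ J.val ((0 : ZMod p)).val).mpr
          intro i hi
          rw [Finset.mem_Icc] at hi
          rw [Ssum_eq_zero p a ε₁ i hi.1 _ (fun h h1 h2 => hA h h1 (by omega)),
            Ssum_eq_zero p a ε₁ i hi.1 _ (fun h h1 h2 => hA h h1 (by omega))]
        · push_neg at hA
          set sset : Set ℕ := {i | 1 ≤ i ∧ i ≤ d ∧ (a i : ZMod p) ≠ 0} with hsset
          have hsne : sset.Nonempty := by
            obtain ⟨i, h1, h2, h3⟩ := hA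
            exact ⟨i, h1, h2, h3⟩
          set s := sInf sset with hs
          obtain ⟨hs1, hsd, has⟩ := Nat.sInf_mem hsne
          have hCs := hC s (Finset.mem_Icc.mpr ⟨hs1, hsd⟩)
          rw [hK, Ssum_zero p b ε₂ s hs1] at hCs
          have e1 : Ssum p a ε₁ s J = (a s : ZMod p) * J ^ s := by
            unfold Ssum
            rw [Finset.sum_eq_zero, zero_add]
            intro h hh
            rw [Finset.mem_Ico] at hh
            have : (a h : ZMod p) = 0 := by
              by_contra hc
              have hmem : h ∈ sset := ⟨hh.1, by omega, hc⟩
              have := Nat.sInf_le hmem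
              omega
            rw [this]
            ring
          rw [e1] at hCs
          have hJ : J = 0 := by
            rcases mul_eq_zero.mp hCs with h' | h'
            · exact absurd h' has
            · exact pow_eq_zero_iff (by omega) |>.mp h'
          exact ⟨J, by simp [hJ], hxJ⟩
      · -- case 4 : main case, a m, b m, b r all nonzero mod p
        set u : ZMod p := (b m : ZMod p) * (a m : ZMod p) with hu
        set v : ZMod p := (b m : ZMod p) * (a (m + 1) : ZMod p) with hv
        set w : ZMod p := ((b (m + 1) : ZMod p) * (a m : ZMod p)) ^ r
          * (a r : ZMod p) * (b r : ZMod p)⁻¹ with hw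
        set Q : Polynomial (ZMod p) := (C u + C v * X) ^ r - C w * X ^ r with hQ
        have hQ0 : Q ≠ 0 := by
          intro h0
          have he : Q.eval 0 = u ^ r := by
            simp [hQ, zero_pow (by omega : r ≠ 0)]
          rw [h0, Polynomial.eval_zero] at he
          exact pow_ne_zero r (mul_ne_zero hbm ham) he.symm
        refine ⟨X * Q, mul_ne_zero X_ne_zero hQ0, ?_, ?_⟩
        · refine le_trans (Polynomial.natDegree_mul_le) ?_
          rw [Polynomial.natDegree_X]
          have h1 : (C u + C v * X : Polynomial (ZMod p)).natDegree ≤ 1 := by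
            refine le_trans (Polynomial.natDegree_add_le _ _) ?_
            simp [Polynomial.natDegree_C]
            exact le_trans (Polynomial.natDegree_mul_le) (by simp)
          have h2 : ((C u + C v * X : Polynomial (ZMod p)) ^ r).natDegree ≤ r :=
            le_trans (Polynomial.natDegree_pow_le) (by nlinarith)
          have h3 : (C w * X ^ r : Polynomial (ZMod p)).natDegree ≤ r :=
            le_trans (Polynomial.natDegree_mul_le) (by simp)
          have h4 : Q.natDegree ≤ r := by
            rw [hQ]
            exact le_trans (Polynomial.natDegree_sub_le _ _) (max_le h2 h3)
          omega
        · intro x hx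
          obtain ⟨J, K, hC, hxJ⟩ := main x hx
          refine ⟨J, ?_, hxJ⟩
          have hchr := chain p d a b ε₁ ε₂ r m J K hr1 hmd hlow hmid hC r le_rfl hrm
          have hchm := chain p d a b ε₁ ε₂ r m J K hr1 hmd hlow hmid hC m hrm le_rfl
          -- derive (E) : a_m J^m + a_{m+1} J^{m+1} = b_{m+1} K^{m+1}
          have hCm := hC m (Finset.mem_Icc.mpr ⟨hm1, by omega⟩)
          have hCm1 := hC (m + 1) (Finset.mem_Icc.mpr ⟨by omega, by omega⟩)
          rw [Ssum_succ p a ε₁ m (by omega) J, Ssum_succ p b ε₂ m (by omega) K,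
            he1, he2] at hCm1
          push_cast at hCm1
          have hE : (a m : ZMod p) * J ^ m + (a (m + 1) : ZMod p) * J ^ (m + 1)
              = (b (m + 1) : ZMod p) * K ^ (m + 1) := by
            linear_combination hCm1 - hCm + hchm
          -- evaluate
          rw [hQ]
          simp only [Polynomial.eval_mul, Polynomial.eval_X, Polynomial.eval_sub,
            Polynomial.eval_pow, Polynomial.eval_add, Polynomial.eval_C]
          by_cases hJ0 : J = 0
          · rw [hJ0, zero_mul]
          · have hJm : J ^ m ≠ 0 := pow_ne_zero m hJ0
            have step1 : (u + v * J) * J ^ m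
                = ((b (m + 1) : ZMod p) * (a m : ZMod p) * K) * J ^ m := by
              rw [hu, hv]
              linear_combination (b m : ZMod p) * hE - (b (m + 1) : ZMod p) * K * hchm
            have step2 : u + v * J = (b (m + 1) : ZMod p) * (a m : ZMod p) * K :=
              mul_right_cancel₀ hJm step1
            have hKr : (b r : ZMod p) * K ^ r = (a r : ZMod p) * J ^ r := hchr.symm
            have step3 : (u + v * J) ^ r = w * J ^ r := by
              rw [step2, mul_pow, hw]
              field_simp
              linear_combination ((b (m + 1) : ZMod p) * (a m : ZMod p)) ^ r * hKr
            rw [step3]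
            ring

lemma sq_add_sq_int (x y : ℤ) (h : x ^ 2 + y ^ 2 = 0) : x = 0 ∧ y = 0 := by
  constructor <;> nlinarith [sq_nonneg x, sq_nonneg y]

lemma int_eq_zero_of_cast (p : ℕ) (x : ℤ) (hx0 : 0 ≤ x) (hx1 : x ≤ (p : ℤ) - 1)
    (h : (x : ZMod p) = 0) : x = 0 := by
  rw [ZMod.intCast_zmod_eq_zero_iff_dvd] at h
  rcases eq_or_lt_of_le hx0 with h' | h'
  · omega
  · have := Int.le_of_dvd h' h
    omega

/-- For `ε', ε'' ∈ {0,1}^{d-1}` with `ε' ≠ ε''` and `a, b ∈ ℤ_p^d`: if the set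
`Z = {j : 1 ≤ j ≤ d-1, ε'_j ≠ ε''_j and a_j² + b_j² ≠ 0}` is nonempty and the generalized
`p`-sets `P^{a,ε'}_{d,p}` and `P^{b,ε''}_{d,p}` are different, then their intersection has
cardinality at most `r + 1`, where `r = min{j : 1 ≤ j ≤ d, a_j² + b_j² ≠ 0}`. -/
theorem gen_pset_inter_card_of_Z_nonempty (p d : ℕ) (hp : p.Prime) (hd : 2 ≤ d)
    (ε' ε'' : ℕ → ℤ)
    (hε' : ∀ i ∈ Finset.Icc 1 (d - 1), ε' i = 0 ∨ ε' i = 1)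
    (hε'' : ∀ i ∈ Finset.Icc 1 (d - 1), ε'' i = 0 ∨ ε'' i = 1)
    (hεne : ∃ j ∈ Finset.Icc 1 (d - 1), ε' j ≠ ε'' j) (a b : ℕ → ℤ)
    (ha : ∀ i ∈ Finset.Icc 1 d, 0 ≤ a i ∧ a i ≤ (p : ℤ) - 1)
    (hb : ∀ i ∈ Finset.Icc 1 d, 0 ≤ b i ∧ b i ≤ (p : ℤ) - 1)
    (hZ : ∃ j ∈ Finset.Icc 1 (d - 1), ε' j ≠ ε'' j ∧ (a j) ^ 2 + (b j) ^ 2 ≠ 0)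
    (hne : genPset p d a ε' ≠ genPset p d b ε'') (r : ℕ)
    (hr : r = sInf {j : ℕ | 1 ≤ j ∧ j ≤ d ∧ (a j) ^ 2 + (b j) ^ 2 ≠ 0}) :
    (genPset p d a ε' ∩ genPset p d b ε'').ncard ≤ r + 1 := by
  classical
  set Zset : Set ℕ := {i | (1 ≤ i ∧ i ≤ d - 1) ∧ ε' i ≠ ε'' i ∧ a i ^ 2 + b i ^ 2 ≠ 0}
    with hZset
  have hZne : Zset.Nonempty := by
    obtain ⟨j, hj, h1, h2⟩ := hZ
    rw [Finset.mem_Icc] at hj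
    exact ⟨j, ⟨hj.1, hj.2⟩, h1, h2⟩
  set m := sInf Zset with hm
  obtain ⟨⟨hm1, hmd'⟩, hεm, habm'⟩ := Nat.sInf_mem hZne
  have hmd : m + 1 ≤ d := by omega
  have hrset : r ∈ {j : ℕ | 1 ≤ j ∧ j ≤ d ∧ (a j) ^ 2 + (b j) ^ 2 ≠ 0} := by
    rw [hr]
    exact Nat.sInf_mem ⟨m, hm1, by omega, habm'⟩
  obtain ⟨hr1, hrd, habr'⟩ := hrset
  have hrm : r ≤ m := by
    rw [hr]
    exact Nat.sInf_le ⟨hm1, by omega, habm'⟩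
  have hlow : ∀ i, 1 ≤ i → i < r → a i = 0 ∧ b i = 0 := by
    intro i h1 h2
    have hni : i ∉ {j : ℕ | 1 ≤ j ∧ j ≤ d ∧ (a j) ^ 2 + (b j) ^ 2 ≠ 0} := by
      intro hmem
      have := Nat.sInf_le hmem
      omega
    simp only [Set.mem_setOf_eq, not_and, not_not] at hni
    exact sq_add_sq_int _ _ (hni h1 (by omega))
  have hmid : ∀ i, r ≤ i → i < m → ε' i = ε'' i ∨ (a i = 0 ∧ b i = 0) := by
    intro i h1 h2
    have hni : i ∉ Zset := by
      intro hmem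
      have := Nat.sInf_le hmem
      omega
    simp only [hZset, Set.mem_setOf_eq, not_and, not_not, ne_eq] at hni
    rcases Classical.em (ε' i = ε'' i) with h | h
    · exact Or.inl h
    · exact Or.inr (sq_add_sq_int _ _ (hni ⟨by omega, by omega⟩ h))
  -- nonvanishing mod p at r and m
  have hcast : ∀ i, 1 ≤ i → i ≤ d → a i ^ 2 + b i ^ 2 ≠ 0 →
      ((a i : ZMod p) ≠ 0 ∨ (b i : ZMod p) ≠ 0) := by
    intro i h1 h2 hne0
    by_contra hc
    push_neg at hc
    have ha' := ha i (Finset.mem_Icc.mpr ⟨h1, h2⟩)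
    have hb' := hb i (Finset.mem_Icc.mpr ⟨h1, h2⟩)
    have e1 := int_eq_zero_of_cast p (a i) ha'.1 ha'.2 hc.1
    have e2 := int_eq_zero_of_cast p (b i) hb'.1 hb'.2 hc.2
    rw [e1, e2] at hne0
    simp at hne0
  have habr := hcast r hr1 hrd habr'
  have habm := hcast m hm1 (by omega) habm'
  have hem' := hε' m (Finset.mem_Icc.mpr ⟨hm1, hmd'⟩)
  have hem'' := hε'' m (Finset.mem_Icc.mpr ⟨hm1, hmd'⟩)
  rcases hem' with h1 | h1 <;> rcases hem'' with h2 | h2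
  · exact absurd (h1.trans h2.symm) hεm
  · -- ε' m = 0, ε'' m = 1 : swap the roles
    rw [Set.inter_comm]
    exact aux_card p d hp b a ε'' ε' r m hm1 hmd h2 h1 hr1 hrm
      (fun i u v => (hlow i u v).symm)
      (fun i u v => ((hmid i u v).imp Eq.symm And.symm))
      habr.symm habm.symm
  · exact aux_card p d hp a b ε' ε'' r m hm1 hmd h1 h2 hr1 hrm hlow hmid habr habm
  · exact absurd (h1.trans h2.symm) hεm
end
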